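/- Let f* ≡ 0, let the label noise be ε ~ N(0, σ²) for some σ > 0, and let D be the corresponding distribution on [0,1]×ℝ (x ~ Uniform([0,1]), y = ε). For S ~ D^n with n ≥ 2 and sorted points 0 < x₁ < ... < xₙ < 1, let ĥ_S be the extended linear-spline interpolator: ĥ_S equals the linear spline ĝ_S on [x₁, xₙ], equals g₁ (extended) on [0, x₁), and equals g_{n−1} (extended) on (xₙ, 1]. Then the expected L₁ population loss of ĥ_S is infinite: E_S[ L₁(ĥ_S) ] = ∞. -/

import Mathlib

open MeasureTheory ProbabilityTheory Filter Set
open scoped ENNReal NNReal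

noncomputable section

/-- The uniform distribution on `[0,1]`. -/
def unif : Measure ℝ := volume.restrict (Set.Icc 0 1)

/-- The `L_p` population loss of a predictor `f` with respect to the distribution `D` of
`(x, f*(x) + ε)` where `x ~ Uniform [0,1]` and `ε ~ ν` is independent of `x`:
`L_p(f) = E_{(x,y) ~ D} |f(x) - y|^p`. -/
def Lp (fstar : ℝ → ℝ) (ν : Measure ℝ) (p : ℝ) (f : ℝ → ℝ) : ℝ≥0∞ :=
  ∫⁻ z : ℝ × ℝ, ENNReal.ofReal (|f z.1 - (fstar z.1 + z.2)| ^ p) ∂(unif.prod ν)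

/-- The reconstruction loss `R_p(f) = E_{x ~ Uniform [0,1]} |f(x) - f*(x)|^p`. -/
def Rp (fstar : ℝ → ℝ) (p : ℝ) (f : ℝ → ℝ) : ℝ≥0∞ :=
  ∫⁻ t, ENNReal.ofReal (|f t - fstar t| ^ p) ∂unif

/-- Distribution of an i.i.d. sample of `n` pairs `(x_i, ε_i)`, `x_i ~ Uniform [0,1]`,
`ε_i ~ ν`.  The data sample `S ~ D^n` is obtained from it via `sampleOf`. -/
def Pn (ν : Measure ℝ) (n : ℕ) : Measure (Fin n → ℝ × ℝ) :=
  Measure.pi fun _ => unif.prod ν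

/-- The sample `S = ((x_i, f*(x_i) + ε_i))_{i < n} ~ D^n` built from `((x_i, ε_i))_{i < n}`. -/
def sampleOf (fstar : ℝ → ℝ) {n : ℕ} (ω : Fin n → ℝ × ℝ) : Fin n → ℝ × ℝ :=
  fun i => ((ω i).1, fstar (ω i).1 + (ω i).2)

/-- The affine function through `(x₁,y₁)` and `(x₂,y₂)`. -/
def affThrough (x₁ y₁ x₂ y₂ : ℝ) : ℝ → ℝ :=
  fun t => y₁ + (y₂ - y₁) / (x₂ - x₁) * (t - x₁)

/-- `g` is the linear-spline interpolator of the `n` sorted points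
`(x 0, y 0), …, (x (n-1), y (n-1))` (0-indexed): it equals `y 0` on `(-∞, x 0)`,
the affine interpolant `g_i` on each `[x i, x (i+1))`, and `y (n-1)` on `[x (n-1), ∞)`. -/
def IsLinSpline (n : ℕ) (x y : ℕ → ℝ) (g : ℝ → ℝ) : Prop :=
  (∀ t, t < x 0 → g t = y 0) ∧
  (∀ i, i + 1 < n → ∀ t ∈ Set.Ico (x i) (x (i + 1)),
      g t = affThrough (x i) (y i) (x (i + 1)) (y (i + 1)) t) ∧
  (∀ t, x (n - 1) ≤ t → g t = y (n - 1))

/-- `x, y` (restricted to indices `< n`) enumerates the sample `S` in strictly increasing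
order of the first coordinates. -/
def SortedVersion {n : ℕ} (S : Fin n → ℝ × ℝ) (x y : ℕ → ℝ) : Prop :=
  ∃ σ : Equiv.Perm (Fin n),
    (∀ i : Fin n, x (i : ℕ) = (S (σ i)).1 ∧ y (i : ℕ) = (S (σ i)).2) ∧
    (∀ i j : Fin n, i < j → x (i : ℕ) < x (j : ℕ))

/-- `h` is the extended linear-spline interpolator `ĥ_S` of the sorted points: it agrees
with the linear spline on `[x 0, x (n-1)]`, equals the extension of the first affine piece
`g₁` on `(-∞, x 0)`, and equals the extension of the last affine piece `g_{n-1}` on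
`[x (n-1), ∞)`. -/
def IsExtSpline (n : ℕ) (x y : ℕ → ℝ) (h : ℝ → ℝ) : Prop :=
  (∀ t, t < x 0 → h t = affThrough (x 0) (y 0) (x 1) (y 1) t) ∧
  (∀ i, i + 1 < n → ∀ t ∈ Set.Ico (x i) (x (i + 1)),
      h t = affThrough (x i) (y i) (x (i + 1)) (y (i + 1)) t) ∧
  (∀ t, x (n - 1) ≤ t → h t = affThrough (x (n - 2)) (y (n - 2)) (x (n - 1)) (y (n - 1)) t)

section SplineAux
open Real

instance : IsProbabilityMeasure unif :=
  ⟨by rw [unif, Measure.restrict_apply_univ, Real.volume_Icc]; norm_num⟩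

/-- the slope-intercept functional -/
def dfn (z0 z1 : ℝ × ℝ) : ℝ := z0.2 / 4 - (z1.2 - z0.2) / (z1.1 - z0.1) / 32

def Hfn (z0 z1 : ℝ × ℝ) : ℝ≥0∞ :=
  if 4⁻¹ < z0.1 ∧ z0.1 < 2⁻¹ ∧ z0.1 < z1.1 ∧ z1.1 < 2⁻¹ then ENNReal.ofReal |dfn z0 z1| else 0

def rfn {n : ℕ} (i : Fin n) (z : ℝ × ℝ) : ℝ≥0∞ :=
  if 2 ≤ (i : ℕ) then (Set.Ioo (2⁻¹ : ℝ) 1 ×ˢ (Set.univ : Set ℝ)).indicator 1 z else 1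

lemma measurable_Hfn : Measurable fun p : (ℝ × ℝ) × (ℝ × ℝ) => Hfn p.1 p.2 := by
  have hd : Measurable fun p : (ℝ × ℝ) × (ℝ × ℝ) => ENNReal.ofReal |dfn p.1 p.2| := by
    apply Measurable.ennreal_ofReal
    apply Measurable.abs
    unfold dfn
    fun_prop
  have hs : MeasurableSet {p : (ℝ × ℝ) × (ℝ × ℝ) |
      4⁻¹ < p.1.1 ∧ p.1.1 < 2⁻¹ ∧ p.1.1 < p.2.1 ∧ p.2.1 < 2⁻¹} := by
    refine MeasurableSet.inter ?_ (MeasurableSet.inter ?_ (MeasurableSet.inter ?_ ?_))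
    · exact measurableSet_lt measurable_const measurable_fst.fst
    · exact measurableSet_lt measurable_fst.fst measurable_const
    · exact measurableSet_lt measurable_fst.fst measurable_snd.fst
    · exact measurableSet_lt measurable_snd.fst measurable_const
  exact Measurable.ite hs hd measurable_const

lemma measurable_rfn {n : ℕ} (i : Fin n) : Measurable (rfn i) := by
  unfold rfn
  split_ifs
  · exact Measurable.indicator measurable_const ((measurableSet_Ioo).prod MeasurableSet.univ)
  · exact measurable_const

lemma rfn_le_one {n : ℕ} (i : Fin n) (z : ℝ × ℝ) : rfn i z ≤ 1 := by
  unfold rfn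
  split_ifs
  · by_cases h : z ∈ Set.Ioo (2⁻¹ : ℝ) 1 ×ˢ (Set.univ : Set ℝ) <;> simp [h]
  · exact le_rfl


lemma lint_inv_top {a b : ℝ} (hab : a < b) :
    ∫⁻ x in Set.Ioo a b, ENNReal.ofReal ((x - a)⁻¹) = ⊤ := by
  by_contra h
  have hmeas : Measurable fun x : ℝ => (x - a)⁻¹ := (measurable_id.sub_const a).inv
  have hint : IntegrableOn (fun x : ℝ => (x - a)⁻¹) (Set.Ioo a b) := by
    refine ⟨hmeas.aestronglyMeasurable, ?_⟩
    rw [hasFiniteIntegral_iff_ofReal ?_]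
    · exact lt_top_iff_ne_top.2 h
    · filter_upwards [ae_restrict_mem measurableSet_Ioo] with x hx
      simp only [Pi.zero_apply]
      exact inv_nonneg.2 (by linarith [hx.1])
  have hii : IntervalIntegrable (fun x : ℝ => (x - a)⁻¹) volume a b := by
    rw [intervalIntegrable_iff_integrableOn_Ioo_of_le hab.le]
    exact hint
  rw [intervalIntegrable_sub_inv_iff] at hii
  rcases hii with h1 | h2
  · exact hab.ne h1
  · exact h2 Set.left_mem_uIcc


lemma gauss_map_neg (v : ℝ≥0) :
    (gaussianReal 0 v).map (fun y : ℝ => -y) = gaussianReal 0 v := by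
  have h := gaussianReal_map_const_mul (μ := 0) (v := v) (-1)
  simp only [neg_one_mul, mul_zero] at h
  convert h using 2
  ext
  simp

lemma gauss_symm_lb (v : ℝ≥0) (c : ℝ) :
    (∫⁻ y, ENNReal.ofReal |y| ∂gaussianReal 0 v)
      ≤ ∫⁻ y, ENNReal.ofReal |c - y| ∂gaussianReal 0 v := by
  have hγ : True := trivial
  have hm1 : Measurable fun y : ℝ => ENNReal.ofReal |c - y| :=
    (measurable_const.sub measurable_id).abs.ennreal_ofReal
  have hm2 : Measurable fun y : ℝ => ENNReal.ofReal |c + y| :=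
    (measurable_const.add measurable_id).abs.ennreal_ofReal
  have heq : ∫⁻ y, ENNReal.ofReal |c - y| ∂gaussianReal 0 v = ∫⁻ y, ENNReal.ofReal |c + y| ∂gaussianReal 0 v := by
    conv_lhs => rw [← gauss_map_neg v]
    rw [lintegral_map hm1 measurable_neg]
    simp only [sub_neg_eq_add]
  have hkey : (2 : ℝ≥0∞) * ∫⁻ y, ENNReal.ofReal |y| ∂gaussianReal 0 v
      ≤ 2 * ∫⁻ y, ENNReal.ofReal |c - y| ∂gaussianReal 0 v := by
    calc (2:ℝ≥0∞) * ∫⁻ y, ENNReal.ofReal |y| ∂gaussianReal 0 v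
        = ∫⁻ y, ENNReal.ofReal (2 * |y|) ∂gaussianReal 0 v := by
          rw [← lintegral_const_mul 2 measurable_abs.ennreal_ofReal]
          congr 1; ext y
          rw [ENNReal.ofReal_mul (by norm_num)]
          norm_num
      _ ≤ ∫⁻ y, (ENNReal.ofReal |c - y| + ENNReal.ofReal |c + y|) ∂gaussianReal 0 v := by
          refine lintegral_mono fun y => ?_
          rw [← ENNReal.ofReal_add (abs_nonneg _) (abs_nonneg _)]
          refine ENNReal.ofReal_le_ofReal ?_
          have : 2 * |y| = |(c + y) - (c - y)| := by rw [show (c+y) - (c-y) = 2*y by ring, abs_mul]; norm_num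
          rw [this]
          exact (abs_sub _ _).trans (by rw [add_comm])
      _ = (∫⁻ y, ENNReal.ofReal |c - y| ∂gaussianReal 0 v) + ∫⁻ y, ENNReal.ofReal |c + y| ∂gaussianReal 0 v :=
          lintegral_add_left hm1 _
      _ = 2 * ∫⁻ y, ENNReal.ofReal |c - y| ∂gaussianReal 0 v := by rw [← heq]; ring
  exact (ENNReal.mul_le_mul_iff_right (by norm_num) (by norm_num)).1 hkey

lemma gauss_abs_pos {v : ℝ≥0} (hv : v ≠ 0) :
    0 < ∫⁻ y, ENNReal.ofReal |y| ∂gaussianReal 0 v := by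
  have h1 : gaussianReal 0 v (Set.Ici 1) ≤ ∫⁻ y, ENNReal.ofReal |y| ∂gaussianReal 0 v := by
    calc gaussianReal 0 v (Set.Ici 1) = ∫⁻ _ in Set.Ici (1:ℝ), 1 ∂gaussianReal 0 v := by
          simp
      _ ≤ ∫⁻ y in Set.Ici (1:ℝ), ENNReal.ofReal |y| ∂gaussianReal 0 v := by
          refine setLIntegral_mono measurable_abs.ennreal_ofReal fun y hy => ?_
          rw [show (1:ℝ≥0∞) = ENNReal.ofReal 1 by simp]
          exact ENNReal.ofReal_le_ofReal (by rw [abs_of_pos (by linarith [mem_Ici.1 hy])]; exact mem_Ici.1 hy)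
      _ ≤ _ := setLIntegral_le_lintegral _ _
  refine lt_of_lt_of_le ?_ h1
  rw [gaussianReal_apply 0 hv]
  rw [lintegral_pos_iff_support (measurable_gaussianPDF 0 v)]
  have hsupp : Function.support (gaussianPDF 0 v) = Set.univ :=
    Set.eq_univ_of_forall fun x => (gaussianPDF_pos 0 hv x).ne'
  rw [hsupp, Measure.restrict_apply_univ, Real.volume_Ici]
  exact ENNReal.zero_lt_top

lemma gauss_integrable_id {v : ℝ≥0} (hv : v ≠ 0) :
    Integrable (fun y : ℝ => y) (gaussianReal 0 v) := by
  have hvpos : (0:ℝ) < (v:ℝ) := NNReal.coe_pos.mpr (pos_iff_ne_zero.2 hv)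
  rw [gaussianReal_of_var_ne_zero 0 hv]
  rw [integrable_withDensity_iff (measurable_gaussianPDF 0 v)
    (Filter.Eventually.of_forall fun x => ENNReal.ofReal_lt_top)]
  have heq : ∀ x : ℝ, x * (gaussianPDF 0 v x).toReal
      = (√(2 * π * v))⁻¹ * (x * rexp (-(2 * (v:ℝ))⁻¹ * x ^ 2)) := by
    intro x
    rw [gaussianPDF, ENNReal.toReal_ofReal (gaussianPDFReal_nonneg 0 v x), gaussianPDFReal]
    rw [show -(x - 0)^2 / (2 * (v:ℝ)) = -(2 * (v:ℝ))⁻¹ * x ^ 2 by rw [sub_zero]; field_simp]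
    ring
  simp only [heq]
  exact (integrable_mul_exp_neg_mul_sq (by positivity)).const_mul _

lemma gauss_mean_zero {v : ℝ≥0} (hv : v ≠ 0) :
    ∫ y, y ∂gaussianReal 0 v = 0 := by
  have h : ∫ y, y ∂gaussianReal 0 v = - ∫ y, y ∂gaussianReal 0 v := by
    conv_lhs => rw [← gauss_map_neg v]
    rw [integral_map (φ := fun y : ℝ => -y) (f := fun y : ℝ => y) measurable_neg.aemeasurable aestronglyMeasurable_id]
    exact integral_neg fun y => y
  linarith

lemma gauss_jensen {v : ℝ≥0} (hv : v ≠ 0) (a : ℝ) :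
    ENNReal.ofReal |a| ≤ ∫⁻ y, ENNReal.ofReal |a - y| ∂gaussianReal 0 v := by
  have hint : Integrable (fun y : ℝ => a - y) (gaussianReal 0 v) :=
    (integrable_const a).sub (gauss_integrable_id hv)
  have hmean : ∫ y, (a - y) ∂gaussianReal 0 v = a := by
    rw [integral_sub (integrable_const a) (gauss_integrable_id hv), gauss_mean_zero hv,
      integral_const]
    simp
  calc ENNReal.ofReal |a| = ENNReal.ofReal |∫ y, (a - y) ∂gaussianReal 0 v| := by rw [hmean]
    _ ≤ ENNReal.ofReal (∫ y, |a - y| ∂gaussianReal 0 v) := by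
        refine ENNReal.ofReal_le_ofReal ?_
        simpa [Real.norm_eq_abs] using norm_integral_le_integral_norm (μ := gaussianReal 0 v)
          (f := fun y : ℝ => a - y)
    _ = ∫⁻ y, ENNReal.ofReal |a - y| ∂gaussianReal 0 v := by
        rw [ofReal_integral_eq_lintegral_ofReal hint.abs
          (Filter.Eventually.of_forall fun y => abs_nonneg _)]


end SplineAux

/-- **Proposition (the extended linear spline is not tempered in expectation).**
For `f* ≡ 0` and Gaussian noise `ε ~ N(0,σ²)`, `σ > 0`, for any (a.e. defined) selection
`F` of the extended linear-spline interpolator `ĥ_S` of the sample `S ~ D^n` (`n ≥ 2`),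
the expected `L₁` population loss is infinite: `E_S [L₁(ĥ_S)] = ∞`. -/
theorem ext_spline_expected_L1_infinite (σ : ℝ) (hσ : 0 < σ) (n : ℕ) (hn : 2 ≤ n)
    (F : (Fin n → ℝ × ℝ) → (ℝ → ℝ))
    (hF : ∀ᵐ ω ∂(Pn (ProbabilityTheory.gaussianReal 0 ⟨σ ^ 2, sq_nonneg σ⟩) n),
      ∃ x y, SortedVersion (sampleOf (fun _ => 0) ω) x y ∧ IsExtSpline n x y (F ω)) :
    ∫⁻ ω, Lp (fun _ => 0) (ProbabilityTheory.gaussianReal 0 ⟨σ ^ 2, sq_nonneg σ⟩) 1 (F ω)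
        ∂(Pn (ProbabilityTheory.gaussianReal 0 ⟨σ ^ 2, sq_nonneg σ⟩) n) = ⊤ := by
  obtain ⟨k, rfl⟩ : ∃ k, n = k + 2 := ⟨n - 2, by omega⟩
  set v : ℝ≥0 := ⟨σ ^ 2, sq_nonneg σ⟩ with hvdef
  have hv : v ≠ 0 := by
    intro h
    have : (v : ℝ) = 0 := by rw [h]; simp
    rw [hvdef] at this
    exact pow_ne_zero 2 hσ.ne' this
  set γ := gaussianReal 0 v with hγdef
  set μ := unif.prod γ with hμdef
  set G : (Fin (k + 2) → ℝ × ℝ) → ℝ≥0∞ :=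
    fun ω => Hfn (ω 0) (ω 1) * ∏ i, rfn i (ω i) with hGdef
  have hpt : ∀ᵐ ω ∂(Pn γ (k + 2)), G ω ≤ Lp (fun _ => 0) γ 1 (F ω) := by
    filter_upwards [hF] with ω hω
    by_cases h0 : (ω 0).1 ∈ Set.Ioo (4⁻¹ : ℝ) 2⁻¹
    swap
    · have hz : Hfn (ω 0) (ω 1) = 0 := by
        rw [Hfn, if_neg]; exact fun hc => h0 ⟨hc.1, hc.2.1⟩
      simp [hGdef, hz]
    by_cases h1 : (ω 1).1 ∈ Set.Ioo ((ω 0).1) (2⁻¹ : ℝ)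
    swap
    · have hz : Hfn (ω 0) (ω 1) = 0 := by
        rw [Hfn, if_neg]; exact fun hc => h1 ⟨hc.2.2.1, hc.2.2.2⟩
      simp [hGdef, hz]
    by_cases h2 : ∀ i : Fin (k + 2), 2 ≤ (i : ℕ) → (ω i).1 ∈ Set.Ioo (2⁻¹ : ℝ) 1
    swap
    · push_neg at h2
      obtain ⟨i, hi2, hiT⟩ := h2
      have hz : rfn i (ω i) = 0 := by
        rw [rfn, if_pos hi2, Set.indicator_of_notMem]
        exact fun hc => hiT hc.1
      have hprod : (∏ j, rfn j (ω j)) = 0 := Finset.prod_eq_zero (Finset.mem_univ i) hz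
      simp [hGdef, hprod]
    -- main case
    have hG1 : G ω ≤ ENNReal.ofReal |dfn (ω 0) (ω 1)| := by
      rw [hGdef]
      calc Hfn (ω 0) (ω 1) * ∏ i, rfn i (ω i) ≤ Hfn (ω 0) (ω 1) * 1 :=
            mul_le_mul_right (Finset.prod_le_one (fun i _ => zero_le) (fun i _ => rfn_le_one i _)) _
        _ = Hfn (ω 0) (ω 1) := mul_one _
        _ ≤ ENNReal.ofReal |dfn (ω 0) (ω 1)| := by
            rw [Hfn]; split_ifs with h
            · exact le_rfl
            · exact zero_le
    refine hG1.trans ?_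
    obtain ⟨x, y, ⟨σp, hxy, hmono⟩, hext⟩ := hω
    -- uniqueness of the two smallest points
    have hmin : ∀ j : Fin (k + 2), j ≠ 0 → (ω 0).1 < (ω j).1 := by
      intro j hj
      rcases Nat.lt_or_ge (j : ℕ) 2 with hlt | hge
      · have hj1 : (j : ℕ) = 1 := by
          have : (j : ℕ) ≠ 0 := fun h => hj (Fin.ext (by simpa using h))
          omega
        have : j = 1 := Fin.ext (by simpa using hj1)
        rw [this]; exact h1.1
      · have := (h2 j hge).1
        have := h0.2
        linarith
    have hsec : ∀ j : Fin (k + 2), j ≠ 0 → j ≠ 1 → (ω 1).1 < (ω j).1 := by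
      intro j hj0 hj1
      have hge : 2 ≤ (j : ℕ) := by
        have a0 : (j : ℕ) ≠ 0 := fun h => hj0 (Fin.ext (by simpa using h))
        have a1 : (j : ℕ) ≠ 1 := fun h => hj1 (Fin.ext (by simpa using h))
        omega
      have := (h2 j hge).1
      have := h1.2
      linarith
    have hσ0 : σp 0 = 0 := by
      by_contra hc
      have hσj : σp (σp.symm 0) = 0 := σp.apply_symm_apply 0
      have hj0 : σp.symm 0 ≠ 0 := fun h => hc ((σp.symm_apply_eq.mp h).symm)
      have hlt : (0 : Fin (k + 2)) < σp.symm 0 := Fin.pos_of_ne_zero hj0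
      have hm := hmono 0 (σp.symm 0) hlt
      have e1 : x ((0 : Fin (k + 2)) : ℕ) = (ω (σp 0)).1 := (hxy 0).1
      have e2 : x ((σp.symm 0 : Fin (k + 2)) : ℕ) = (ω 0).1 := by
        have := (hxy (σp.symm 0)).1
        rwa [hσj] at this
      rw [e1, e2] at hm
      exact absurd hm (not_lt.2 (hmin (σp 0) hc).le)
    have hσ1 : σp 1 = 1 := by
      by_contra hc
      have hne0 : σp 1 ≠ 0 := by
        rw [← hσ0]
        exact fun h => one_ne_zero (σp.injective h)
      have hσj : σp (σp.symm 1) = 1 := σp.apply_symm_apply 1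
      have hj0 : σp.symm 1 ≠ 0 := fun h => by
        rw [h, hσ0] at hσj; exact one_ne_zero hσj.symm
      have hj1 : σp.symm 1 ≠ 1 := fun h => hc ((σp.symm_apply_eq.mp h).symm)
      have hlt : (1 : Fin (k + 2)) < σp.symm 1 := by
        rw [Fin.lt_def]
        have a0 : ((σp.symm 1 : Fin (k + 2)) : ℕ) ≠ 0 :=
          fun h => hj0 (Fin.ext (by simpa using h))
        have a1 : ((σp.symm 1 : Fin (k + 2)) : ℕ) ≠ 1 :=
          fun h => hj1 (Fin.ext (by simpa using h))
        simp only [Fin.val_one]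
        omega
      have hm := hmono 1 (σp.symm 1) hlt
      have e1 : x ((1 : Fin (k + 2)) : ℕ) = (ω (σp 1)).1 := (hxy 1).1
      have e2 : x ((σp.symm 1 : Fin (k + 2)) : ℕ) = (ω 1).1 := by
        have := (hxy (σp.symm 1)).1
        rwa [hσj] at this
      rw [e1, e2] at hm
      exact absurd hm (not_lt.2 (hsec (σp 1) hne0 hc).le)
    have hx0 : x 0 = (ω 0).1 := by
      have := (hxy 0).1; rw [hσ0] at this; simpa [sampleOf] using this
    have hy0 : y 0 = (ω 0).2 := by
      have := (hxy 0).2; rw [hσ0] at this; simpa [sampleOf] using this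
    have hx1 : x 1 = (ω 1).1 := by
      have := (hxy 1).1; rw [hσ1] at this; simpa [sampleOf] using this
    have hy1 : y 1 = (ω 1).2 := by
      have := (hxy 1).2; rw [hσ1] at this; simpa [sampleOf] using this
    have haff : ∀ t : ℝ, t < (ω 0).1 →
        F ω t = affThrough ((ω 0).1) ((ω 0).2) ((ω 1).1) ((ω 1).2) t := by
      intro t ht
      have := hext.1 t (by rw [hx0]; exact ht)
      rwa [hx0, hy0, hx1, hy1] at this
    -- analytic chain
    set u0 : ℝ := (ω 0).1 with hu0def
    set aff : ℝ → ℝ := affThrough ((ω 0).1) ((ω 0).2) ((ω 1).1) ((ω 1).2) with haffdef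
    have hcont : Continuous aff := by
      rw [haffdef]
      unfold affThrough
      exact continuous_const.add (continuous_const.mul (continuous_id.sub continuous_const))
    have hsub : Set.Ico (u0 - 4⁻¹) u0 ⊆ Set.Icc (0 : ℝ) 1 := by
      intro t ht
      constructor
      · have := h0.1; have := ht.1; linarith
      · have := h0.2; have := ht.2; linarith
    have hrestr : unif.restrict (Set.Ico (u0 - 4⁻¹) u0)
        = volume.restrict (Set.Ico (u0 - 4⁻¹) u0) := by
      rw [unif, Measure.restrict_restrict measurableSet_Ico,
        Set.inter_eq_self_of_subset_left hsub]
    have hInt : IntegrableOn aff (Set.Ico (u0 - 4⁻¹) u0) volume :=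
      (hcont.integrableOn_Icc (a := u0 - 4⁻¹) (b := u0)).mono_set Set.Ico_subset_Icc_self
    have hcomp : ∫ t in Set.Ico (u0 - 4⁻¹) u0, aff t ∂volume = dfn (ω 0) (ω 1) := by
      rw [MeasureTheory.restrict_Ico_eq_restrict_Ioc, ← intervalIntegral.integral_of_le (by linarith : u0 - 4⁻¹ ≤ u0)]
      rw [haffdef]
      unfold affThrough dfn
      have hc : Continuous fun x : ℝ =>
          ((ω 1).2 - (ω 0).2) / ((ω 1).1 - (ω 0).1) * (x - (ω 0).1) := by fun_prop
      rw [intervalIntegral.integral_add (_root_.intervalIntegrable_const (c := (ω 0).2))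
        (hc.intervalIntegrable _ _)]
      rw [intervalIntegral.integral_const, intervalIntegral.integral_const_mul,
        intervalIntegral.integral_comp_sub_right (fun t => t) ((ω 0).1), integral_id]
      rw [smul_eq_mul, ← hu0def]
      ring_nf
    have hmeasaff : Measurable fun z : ℝ × ℝ => ENNReal.ofReal |aff z.1 - z.2| :=
      (((hcont.measurable.comp measurable_fst).sub measurable_snd).abs).ennreal_ofReal
    calc ENNReal.ofReal |dfn (ω 0) (ω 1)|
        = ENNReal.ofReal |∫ t in Set.Ico (u0 - 4⁻¹) u0, aff t ∂volume| := by rw [hcomp]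
      _ ≤ ENNReal.ofReal (∫ t in Set.Ico (u0 - 4⁻¹) u0, |aff t| ∂volume) := by
          refine ENNReal.ofReal_le_ofReal ?_
          simpa [Real.norm_eq_abs] using
            norm_integral_le_integral_norm (μ := volume.restrict (Set.Ico (u0 - 4⁻¹) u0)) aff
      _ = ∫⁻ t in Set.Ico (u0 - 4⁻¹) u0, ENNReal.ofReal |aff t| ∂volume :=
          ofReal_integral_eq_lintegral_ofReal hInt.abs (ae_of_all _ fun t => abs_nonneg _)
      _ = ∫⁻ t in Set.Ico (u0 - 4⁻¹) u0, ENNReal.ofReal |aff t| ∂unif := by rw [hrestr]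
      _ ≤ ∫⁻ t in Set.Ico (u0 - 4⁻¹) u0, ∫⁻ yy, ENNReal.ofReal |aff t - yy| ∂γ ∂unif :=
          lintegral_mono fun t => gauss_jensen hv (aff t)
      _ = ∫⁻ z in Set.Ico (u0 - 4⁻¹) u0 ×ˢ (Set.univ : Set ℝ),
            ENNReal.ofReal |aff z.1 - z.2| ∂μ := by
          rw [hμdef, ← Measure.prod_restrict, Measure.restrict_univ,
            lintegral_prod _ hmeasaff.aemeasurable]
      _ = ∫⁻ z in Set.Ico (u0 - 4⁻¹) u0 ×ˢ (Set.univ : Set ℝ),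
            ENNReal.ofReal |F ω z.1 - z.2| ∂μ := by
          refine setLIntegral_congr_fun (measurableSet_Ico.prod MeasurableSet.univ)
            (fun z hz => ?_)
          rw [haff z.1 hz.1.2]
      _ ≤ ∫⁻ z, ENNReal.ofReal |F ω z.1 - z.2| ∂μ := setLIntegral_le_lintegral _ _
      _ = Lp (fun _ => 0) γ 1 (F ω) := by
          unfold _root_.Lp
          rw [← hμdef]
          simp [Real.rpow_one]
  have htop : ∫⁻ ω, G ω ∂(Pn γ (k + 2)) = ⊤ := by
    haveI hPμ : IsProbabilityMeasure μ := by rw [hμdef]; infer_instance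
    have hG : Measurable G := by
      rw [hGdef]
      exact (measurable_Hfn.comp ((measurable_pi_apply (0 : Fin (k + 2))).prodMk (measurable_pi_apply (1 : Fin (k + 2))))).mul
        (Finset.measurable_prod _ fun i _ => (measurable_rfn i).comp (measurable_pi_apply i))
    set m := ∫⁻ y, ENNReal.ofReal |y| ∂γ with hmdef
    have hm0 : m ≠ 0 := (gauss_abs_pos hv).ne'
    set T : Set (ℝ × ℝ) := Set.Ioo (2⁻¹ : ℝ) 1 ×ˢ (Set.univ : Set ℝ) with hTdef
    have hTmeas : MeasurableSet T := measurableSet_Ioo.prod MeasurableSet.univ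
    have hT : μ T = ENNReal.ofReal 2⁻¹ := by
      rw [hTdef, hμdef, Measure.prod_prod, measure_univ, mul_one, unif,
        Measure.restrict_apply measurableSet_Ioo,
        Set.inter_eq_self_of_subset_left
          (show Set.Ioo (2⁻¹ : ℝ) 1 ⊆ Set.Icc 0 1 from fun t ht => ⟨by linarith [ht.1], ht.2.le⟩),
        Real.volume_Ioo]
      norm_num
    -- the inner single-coordinate integral diverges
    have hinner : ∀ z0 : ℝ × ℝ, 4⁻¹ < z0.1 → z0.1 < 2⁻¹ → ∫⁻ z1, Hfn z0 z1 ∂μ = ⊤ := by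
      intro z0 ha hb
      have hmz : Measurable fun z1 : ℝ × ℝ => Hfn z0 z1 :=
        measurable_Hfn.comp (measurable_const.prodMk measurable_id)
      rw [hμdef, lintegral_prod _ hmz.aemeasurable, eq_top_iff]
      have hdiv : ∫⁻ u1 in Set.Ioo z0.1 2⁻¹,
          ENNReal.ofReal ((32 * (u1 - z0.1))⁻¹) ∂volume = ⊤ := by
        calc ∫⁻ u1 in Set.Ioo z0.1 2⁻¹, ENNReal.ofReal ((32 * (u1 - z0.1))⁻¹) ∂volume
            = ∫⁻ u1 in Set.Ioo z0.1 2⁻¹,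
                ENNReal.ofReal 32⁻¹ * ENNReal.ofReal ((u1 - z0.1)⁻¹) ∂volume := by
              refine lintegral_congr fun u1 => ?_
              rw [mul_inv, ENNReal.ofReal_mul (by norm_num)]
          _ = ENNReal.ofReal 32⁻¹ * ∫⁻ u1 in Set.Ioo z0.1 2⁻¹,
                ENNReal.ofReal ((u1 - z0.1)⁻¹) ∂volume :=
              lintegral_const_mul _ ((measurable_id.sub_const _).inv.ennreal_ofReal)
          _ = ⊤ := by
              rw [lint_inv_top hb]
              exact ENNReal.mul_top (ne_of_gt (ENNReal.ofReal_pos.2 (by norm_num)))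
      have hstep1 : ∀ u1 ∈ Set.Ioo z0.1 (2⁻¹ : ℝ),
          m * ENNReal.ofReal ((32 * (u1 - z0.1))⁻¹) ≤ ∫⁻ e1, Hfn z0 (u1, e1) ∂γ := by
        intro u1 hu1
        have hg : 0 < u1 - z0.1 := by linarith [hu1.1]
        have heq : ∀ e1 : ℝ, Hfn z0 (u1, e1)
            = ENNReal.ofReal |8 * (u1 - z0.1) * z0.2 + z0.2 - e1|
              * ENNReal.ofReal ((32 * (u1 - z0.1))⁻¹) := by
          intro e1
          rw [Hfn, if_pos (show 4⁻¹ < z0.1 ∧ z0.1 < 2⁻¹ ∧ z0.1 < (u1, e1).1 ∧ (u1, e1).1 < 2⁻¹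
            from ⟨ha, hb, hu1.1, hu1.2⟩)]
          rw [← ENNReal.ofReal_mul' (by positivity)]
          congr 1
          rw [← abs_of_pos (show (0 : ℝ) < (32 * (u1 - z0.1))⁻¹ by positivity), ← abs_mul]
          congr 1
          unfold dfn
          field_simp
          ring
        calc m * ENNReal.ofReal ((32 * (u1 - z0.1))⁻¹)
            ≤ (∫⁻ e1, ENNReal.ofReal |8 * (u1 - z0.1) * z0.2 + z0.2 - e1| ∂γ)
                * ENNReal.ofReal ((32 * (u1 - z0.1))⁻¹) :=
              mul_le_mul_left (gauss_symm_lb v _) _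
          _ = ∫⁻ e1, ENNReal.ofReal |8 * (u1 - z0.1) * z0.2 + z0.2 - e1|
                * ENNReal.ofReal ((32 * (u1 - z0.1))⁻¹) ∂γ :=
              (lintegral_mul_const _ ((measurable_const.sub measurable_id).abs.ennreal_ofReal)).symm
          _ = ∫⁻ e1, Hfn z0 (u1, e1) ∂γ := lintegral_congr fun e1 => (heq e1).symm
      have hsubI : Set.Ioo z0.1 (2⁻¹ : ℝ) ⊆ Set.Icc (0 : ℝ) 1 :=
        fun t ht => ⟨by linarith [ht.1], by linarith [ht.2]⟩
      have hrestr2 : unif.restrict (Set.Ioo z0.1 (2⁻¹ : ℝ))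
          = volume.restrict (Set.Ioo z0.1 (2⁻¹ : ℝ)) := by
        rw [unif, Measure.restrict_restrict measurableSet_Ioo,
          Set.inter_eq_self_of_subset_left hsubI]
      calc (⊤ : ℝ≥0∞)
          = m * ∫⁻ u1 in Set.Ioo z0.1 2⁻¹, ENNReal.ofReal ((32 * (u1 - z0.1))⁻¹) ∂volume := by
            rw [hdiv, ENNReal.mul_top hm0]
        _ = ∫⁻ u1 in Set.Ioo z0.1 2⁻¹, m * ENNReal.ofReal ((32 * (u1 - z0.1))⁻¹) ∂volume :=
            (lintegral_const_mul _ (((measurable_id.sub_const z0.1).const_mul 32).inv.ennreal_ofReal)).symm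
        _ = ∫⁻ u1 in Set.Ioo z0.1 2⁻¹, m * ENNReal.ofReal ((32 * (u1 - z0.1))⁻¹) ∂unif := by
            rw [hrestr2]
        _ ≤ ∫⁻ u1 in Set.Ioo z0.1 2⁻¹, (∫⁻ e1, Hfn z0 (u1, e1) ∂γ) ∂unif :=
            lintegral_mono_ae ((ae_restrict_iff' measurableSet_Ioo).2 (ae_of_all _ hstep1))
        _ ≤ ∫⁻ u1, (∫⁻ e1, Hfn z0 (u1, e1) ∂γ) ∂unif := setLIntegral_le_lintegral _ _
    -- evaluation of G after peeling two coordinates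
    set E2 : (Fin (k + 2) → ℝ × ℝ) ≃ᵐ (ℝ × ℝ) × (Fin (k + 1) → ℝ × ℝ) :=
      MeasurableEquiv.piFinSuccAbove (fun _ : Fin (k + 2) => ℝ × ℝ) 0 with hE2
    set E1 : (Fin (k + 1) → ℝ × ℝ) ≃ᵐ (ℝ × ℝ) × (Fin k → ℝ × ℝ) :=
      MeasurableEquiv.piFinSuccAbove (fun _ : Fin (k + 1) => ℝ × ℝ) 0 with hE1
    have hGval : ∀ (z0 z1 : ℝ × ℝ) (ρ : Fin k → ℝ × ℝ),
        G (E2.symm (z0, E1.symm (z1, ρ)))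
          = Hfn z0 z1 * (Set.univ.pi fun _ : Fin k => T).indicator 1 ρ := by
      intro z0 z1 ρ
      have hs1 : E1.symm (z1, ρ) = Fin.cons z1 ρ := Fin.insertNth_zero' z1 ρ
      have hs2 : E2.symm (z0, Fin.cons z1 ρ) = Fin.cons z0 (Fin.cons z1 ρ) :=
        Fin.insertNth_zero' z0 (Fin.cons z1 ρ)
      rw [hs1, hs2, hGdef]
      simp only
      have hW0 : (Fin.cons z0 (Fin.cons z1 ρ) : Fin (k + 2) → ℝ × ℝ) 0 = z0 := Fin.cons_zero _ _
      have hW1 : (Fin.cons z0 (Fin.cons z1 ρ) : Fin (k + 2) → ℝ × ℝ) 1 = z1 := by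
        rw [show (1 : Fin (k + 2)) = Fin.succ 0 from rfl, Fin.cons_succ, Fin.cons_zero]
      rw [hW0, hW1]
      congr 1
      rw [Fin.prod_univ_succ, Fin.prod_univ_succ]
      have hr0 : rfn (0 : Fin (k + 2)) ((Fin.cons z0 (Fin.cons z1 ρ) : Fin (k + 2) → ℝ × ℝ) 0) = 1 := by
        rw [rfn, if_neg]; simp
      have hr1 : rfn (Fin.succ (0 : Fin (k + 1))) ((Fin.cons z0 (Fin.cons z1 ρ) : Fin (k + 2) → ℝ × ℝ) (Fin.succ 0)) = 1 := by
        rw [rfn, if_neg]; simp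
      rw [hr0, hr1, one_mul, one_mul]
      have hrj : ∀ j : Fin k, rfn (Fin.succ (Fin.succ j))
          ((Fin.cons z0 (Fin.cons z1 ρ) : Fin (k + 2) → ℝ × ℝ) (Fin.succ (Fin.succ j)))
            = T.indicator 1 (ρ j) := by
        intro j
        rw [Fin.cons_succ, Fin.cons_succ, rfn, if_pos (by simp [Fin.val_succ])]
      rw [Finset.prod_congr rfl fun j _ => hrj j]
      by_cases hρ : ρ ∈ Set.univ.pi fun _ : Fin k => T
      · rw [Set.indicator_of_mem hρ]
        rw [Set.mem_univ_pi] at hρ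
        simp only [Pi.one_apply]
        exact Finset.prod_eq_one fun j _ => by rw [Set.indicator_of_mem (hρ j)]; rfl
      · rw [Set.indicator_of_notMem hρ]
        rw [Set.mem_univ_pi] at hρ
        push_neg at hρ
        obtain ⟨j, hj⟩ := hρ
        exact Finset.prod_eq_zero (Finset.mem_univ j) (Set.indicator_of_notMem hj _)
    have hindmeas : Measurable ((Set.univ.pi fun _ : Fin k => T).indicator
        (1 : (Fin k → ℝ × ℝ) → ℝ≥0∞)) :=
      measurable_one.indicator (MeasurableSet.univ_pi fun _ => hTmeas)
    have hpi : ∫⁻ ρ, (Set.univ.pi fun _ : Fin k => T).indicator 1 ρ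
        ∂(Measure.pi fun _ : Fin k => μ) = (ENNReal.ofReal 2⁻¹) ^ k := by
      rw [lintegral_indicator (MeasurableSet.univ_pi fun _ => hTmeas)]
      simp only [Pi.one_apply]
      rw [setLIntegral_one, Measure.pi_pi]
      simp [hT]
    have hS0 : μ (Set.Ioo (4⁻¹ : ℝ) 2⁻¹ ×ˢ (Set.univ : Set ℝ)) = ENNReal.ofReal 4⁻¹ := by
      rw [hμdef, Measure.prod_prod, measure_univ, mul_one, unif,
        Measure.restrict_apply measurableSet_Ioo,
        Set.inter_eq_self_of_subset_left
          (show Set.Ioo (4⁻¹ : ℝ) 2⁻¹ ⊆ Set.Icc 0 1 from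
            fun t ht => ⟨by linarith [ht.1], by linarith [ht.2]⟩),
        Real.volume_Ioo]
      norm_num
    have hJ : ∫⁻ z0, ∫⁻ z1, Hfn z0 z1 ∂μ ∂μ = ⊤ := by
      rw [eq_top_iff]
      calc (⊤ : ℝ≥0∞)
          = ⊤ * μ (Set.Ioo (4⁻¹ : ℝ) 2⁻¹ ×ˢ (Set.univ : Set ℝ)) := by
            rw [hS0]
            exact (ENNReal.top_mul (ne_of_gt (ENNReal.ofReal_pos.2 (by norm_num)))).symm
        _ = ∫⁻ _ in Set.Ioo (4⁻¹ : ℝ) 2⁻¹ ×ˢ (Set.univ : Set ℝ), (⊤ : ℝ≥0∞) ∂μ :=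
            (setLIntegral_const _ _).symm
        _ = ∫⁻ z0 in Set.Ioo (4⁻¹ : ℝ) 2⁻¹ ×ˢ (Set.univ : Set ℝ), ∫⁻ z1, Hfn z0 z1 ∂μ ∂μ :=
            setLIntegral_congr_fun (measurableSet_Ioo.prod MeasurableSet.univ)
              (fun z0 hz0 => (hinner z0 hz0.1.1 hz0.1.2).symm)
        _ ≤ ∫⁻ z0, ∫⁻ z1, Hfn z0 z1 ∂μ ∂μ := setLIntegral_le_lintegral _ _
    have hmHz : Measurable fun p : (ℝ × ℝ) × (ℝ × ℝ) => Hfn p.1 p.2 := measurable_Hfn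
    calc ∫⁻ ω, G ω ∂(Pn γ (k + 2))
        = ∫⁻ p, G (E2.symm p) ∂(μ.prod (Measure.pi fun _ : Fin (k + 1) => μ)) := by
          have h := (measurePreserving_piFinSuccAbove (fun _ : Fin (k + 2) => μ) 0).lintegral_comp_emb
            (MeasurableEquiv.measurableEmbedding E2) (fun p => G (E2.symm p))
          simp only [hE2, MeasurableEquiv.symm_apply_apply] at h
          exact h
      _ = ∫⁻ z0, ∫⁻ w, G (E2.symm (z0, w)) ∂(Measure.pi fun _ : Fin (k + 1) => μ) ∂μ :=
          lintegral_prod _ ((hG.comp E2.symm.measurable).aemeasurable)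
      _ = ∫⁻ z0, ∫⁻ q, G (E2.symm (z0, E1.symm q)) ∂(μ.prod (Measure.pi fun _ : Fin k => μ)) ∂μ := by
          refine lintegral_congr fun z0 => ?_
          have h := (measurePreserving_piFinSuccAbove (fun _ : Fin (k + 1) => μ) 0).lintegral_comp_emb
            (MeasurableEquiv.measurableEmbedding E1) (fun q => G (E2.symm (z0, E1.symm q)))
          simp only [hE1, MeasurableEquiv.symm_apply_apply] at h
          exact h
      _ = ∫⁻ z0, ∫⁻ z1, ∫⁻ ρ, G (E2.symm (z0, E1.symm (z1, ρ)))
            ∂(Measure.pi fun _ : Fin k => μ) ∂μ ∂μ := by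
          refine lintegral_congr fun z0 => ?_
          exact lintegral_prod _ (((hG.comp E2.symm.measurable).comp
            (measurable_const.prodMk E1.symm.measurable)).aemeasurable)
      _ = ∫⁻ z0, ∫⁻ z1, Hfn z0 z1 * (ENNReal.ofReal 2⁻¹) ^ k ∂μ ∂μ := by
          refine lintegral_congr fun z0 => lintegral_congr fun z1 => ?_
          rw [lintegral_congr fun ρ => hGval z0 z1 ρ, lintegral_const_mul _ hindmeas, hpi]
      _ = (∫⁻ z0, ∫⁻ z1, Hfn z0 z1 ∂μ ∂μ) * (ENNReal.ofReal 2⁻¹) ^ k := by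
          have hM1 : Measurable fun z0 : ℝ × ℝ => ∫⁻ z1, Hfn z0 z1 ∂μ :=
            Measurable.lintegral_prod_right (f := Hfn) (by exact measurable_Hfn)
          rw [← lintegral_mul_const _ hM1]
          refine lintegral_congr fun z0 => ?_
          have hz0m : Measurable fun z1 : ℝ × ℝ => Hfn z0 z1 := by
            exact measurable_Hfn.comp (measurable_const.prodMk measurable_id)
          exact lintegral_mul_const _ hz0m
      _ = ⊤ := by
          rw [hJ]
          exact ENNReal.top_mul (pow_ne_zero _ (ne_of_gt (ENNReal.ofReal_pos.2 (by norm_num))))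
  have h := lintegral_mono_ae hpt
  rw [htop] at h
  exact top_le_iff.1 h


end
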